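/- arXiv:2205.05138 — 3 statements merged into one kernel-verified Lean document; each statement's English description precedes it below -/
import Mathlib

section
/- (Theorem 1, probabilistic core via union bound.) Let 0 < α < β < 1, N ≥ 1 and n ≥ 1. Let (X_{m,i}) for m = 1, …, n and i = 1, …, N be independent identically distributed real-valued random variables, and let q_β ∈ ℝ satisfy P(X_{1,1} ≤ q_β) ≥ β. Then the probability that there exists some batch m ∈ {1, …, n} with q_β < q̂_α(X_{m,1},…,X_{m,N}) is at most n·exp(−2N(β − α)²). -/
open Finset MeasureTheory ProbabilityTheory

/-- Two-point Pinsker inequality. -/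
lemma two_point_pinsker {a b : ℝ} (ha : 0 < a) (hab : a < b) (hb : b < 1) :
    2 * (b - a) ^ 2 ≤ a * (Real.log a - Real.log b) + (1 - a) * (Real.log (1 - a) - Real.log (1 - b)) := by
  set f : ℝ → ℝ := fun x =>
    a * (Real.log a - Real.log x) + (1 - a) * (Real.log (1 - a) - Real.log (1 - x)) - 2 * (x - a) ^ 2 with hf
  have hderiv : ∀ x ∈ Set.Icc a b, HasDerivAt f (-(a / x) + (1 - a) / (1 - x) - 4 * (x - a)) x := by
    intro x hx
    have hx0 : 0 < x := lt_of_lt_of_le ha hx.1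
    have hx1 : x < 1 := lt_of_le_of_lt hx.2 hb
    have h1 : HasDerivAt (fun x : ℝ => Real.log x) x⁻¹ x := Real.hasDerivAt_log hx0.ne'
    have h2 : HasDerivAt (fun x : ℝ => Real.log (1 - x)) (-(1 - x)⁻¹) x := by
      have := (Real.hasDerivAt_log (by linarith : (1:ℝ) - x ≠ 0)).comp x
        ((hasDerivAt_const x (1:ℝ)).sub (hasDerivAt_id x))
      simpa [Function.comp_def] using this
    have h3 : HasDerivAt f
        (a * (0 - x⁻¹) + (1 - a) * (0 - (-(1 - x)⁻¹)) - 2 * (2 * (x - a) ^ 1 * (1 - 0))) x := by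
      exact (((hasDerivAt_const x (Real.log a)).sub h1).const_mul a |>.add
        (((hasDerivAt_const x (Real.log (1 - a))).sub h2).const_mul (1 - a))).sub
        (((((hasDerivAt_id x).sub (hasDerivAt_const x a)).pow 2)).const_mul 2)
    have hx0' : x ≠ 0 := hx0.ne'
    have hx1' : (1:ℝ) - x ≠ 0 := by linarith
    have e : -(a / x) + (1 - a) / (1 - x) - 4 * (x - a)
        = a * (0 - x⁻¹) + (1 - a) * (0 - (-(1 - x)⁻¹)) - 2 * (2 * (x - a) ^ 1 * (1 - 0)) := by
      field_simp
      ring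
    rw [e]; exact h3
  have hmono : MonotoneOn f (Set.Icc a b) := by
    apply monotoneOn_of_deriv_nonneg (convex_Icc a b)
    · exact fun x hx => (hderiv x hx).continuousAt.continuousWithinAt
    · intro x hx
      rw [interior_Icc] at hx
      exact ((hderiv x (Set.mem_Icc_of_Ioo hx)).differentiableAt).differentiableWithinAt
    · intro x hx
      rw [interior_Icc] at hx
      rw [((hderiv x (Set.mem_Icc_of_Ioo hx)).deriv)]
      have hx0 : 0 < x := lt_of_lt_of_le ha (le_of_lt hx.1)
      have hx1 : x < 1 := lt_of_lt_of_le hx.2 hb.le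
      have hxx : (0:ℝ) < x * (1 - x) := by nlinarith
      have hx0' : x ≠ 0 := hx0.ne'
      have hx1' : (1:ℝ) - x ≠ 0 := by linarith
      have key : -(a / x) + (1 - a) / (1 - x) - 4 * (x - a)
          = ((x - a) * (2 * x - 1) ^ 2) / (x * (1 - x)) := by
        field_simp
        ring
      rw [key]
      apply div_nonneg _ hxx.le
      have := hx.1
      nlinarith [sq_nonneg (2 * x - 1)]
  have hfa : f a = 0 := by simp [hf]
  have := hmono (Set.left_mem_Icc.2 hab.le) (Set.right_mem_Icc.2 hab.le) hab.le
  rw [hfa] at this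
  simp only [hf] at this
  linarith

lemma indep_row {Ω : Type*} [MeasurableSpace Ω] {P : Measure Ω}
    {n N : ℕ} (X : Fin n → Fin N → Ω → ℝ)
    (hindep : iIndepFun
      (fun p : Fin n × Fin N => X p.1 p.2) P) (m : Fin n) :
    iIndepFun (fun i => X m i) P := by
  rw [iIndepFun_iff_measure_inter_preimage_eq_mul]
  intro S sets hsets
  classical
  let emb : Fin N ↪ Fin n × Fin N := ⟨fun i => (m, i), fun i j h => by simpa using h⟩
  have hemb : ∀ i, emb i = (m, i) := fun i => rfl
  have key := hindep.measure_inter_preimage_eq_mul (S.map emb)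
    (sets := fun p => sets p.2)
    (fun p hp => by
      obtain ⟨i, hi, rfl⟩ := Finset.mem_map.1 hp
      exact hsets i hi)
  have h1 : (⋂ p ∈ S.map emb, (fun ω => X p.1 p.2 ω) ⁻¹' sets p.2)
      = ⋂ i ∈ S, X m i ⁻¹' sets i := by
    ext ω
    simp [Finset.mem_map, emb, hemb]
  have h2 : (∏ p ∈ S.map emb, P ((fun ω => X p.1 p.2 ω) ⁻¹' sets p.2))
      = ∏ i ∈ S, P (X m i ⁻¹' sets i) := by
    rw [Finset.prod_map]
    rfl
  rw [h1, h2] at key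
  exact key

/-- The empirical `α`-quantile of the sample `R₁, …, R_N`:
`q̂_α(R) = min {q : ℝ | #{i : Rᵢ ≤ q} ≥ α·N}`. -/
noncomputable def empQuantile (N : ℕ) (α : ℝ) (R : Fin N → ℝ) : ℝ :=
  sInf {q : ℝ | α * N ≤ (univ.filter fun i => R i ≤ q).card}

lemma empQuantile_le {N : ℕ} {α q : ℝ} (hα : 0 < α) (hN : 1 ≤ N) (R : Fin N → ℝ)
    (h : α * N ≤ ((univ.filter fun i => R i ≤ q).card : ℝ)) : empQuantile N α R ≤ q := by
  have hNe : Nonempty (Fin N) := ⟨⟨0, hN⟩⟩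
  have hNpos : (0:ℝ) < N := by exact_mod_cast Nat.lt_of_lt_of_le Nat.zero_lt_one hN
  have hbdd : BddBelow {q : ℝ | α * N ≤ ((univ.filter fun i => R i ≤ q).card : ℝ)} := by
    refine ⟨(univ.image R).min' (by simp [Finset.univ_nonempty]), ?_⟩
    intro q' hq'
    have hq' : α * N ≤ ((univ.filter fun i => R i ≤ q').card : ℝ) := hq'
    have hpos : 0 < ((univ.filter fun i => R i ≤ q').card : ℝ) :=
      lt_of_lt_of_le (mul_pos hα hNpos) hq'
    have hpos' : 0 < (univ.filter fun i => R i ≤ q').card := by exact_mod_cast hpos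
    obtain ⟨i, hi⟩ := Finset.card_pos.1 hpos'
    have hi' := Finset.mem_filter.1 hi
    exact le_trans (Finset.min'_le _ _ (Finset.mem_image_of_mem R (Finset.mem_univ i))) hi'.2
  exact csInf_le hbdd (show _ ∈ {q : ℝ | α * N ≤ ((univ.filter fun i => R i ≤ q).card : ℝ)} from h)

/-- **Theorem 1, probabilistic core via union bound.** Let `0 < α < β < 1`, `N ≥ 1`
and `n ≥ 1`. Let `(X_{m,i})`, `m = 1, …, n`, `i = 1, …, N`, be i.i.d. real-valued
random variables, and let `q_β ∈ ℝ` satisfy `P(X_{1,1} ≤ q_β) ≥ β`. Then the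
probability that some batch `m` has `q_β < q̂_α(X_{m,1},…,X_{m,N})` is at most
`n·exp (-2N(β - α)²)`. -/
theorem blindness_union_bound
    {Ω : Type*} [MeasurableSpace Ω] (P : Measure Ω) [IsProbabilityMeasure P]
    {α β : ℝ} (hα : 0 < α) (hαβ : α < β) (hβ : β < 1)
    {N n : ℕ} (hN : 1 ≤ N) (hn : 1 ≤ n)
    (X : Fin n → Fin N → Ω → ℝ) (hmeas : ∀ m i, Measurable (X m i))
    (hindep : iIndepFun
      (fun p : Fin n × Fin N => X p.1 p.2) P)
    (hident : ∀ m i m' i',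
      Measure.map (X m i) P = Measure.map (X m' i') P)
    (qβ : ℝ) (hq : ∀ m i, ENNReal.ofReal β ≤ P {ω | X m i ω ≤ qβ}) :
    P {ω | ∃ m, qβ < empQuantile N α (fun i => X m i ω)} ≤
      ENNReal.ofReal (n * Real.exp (-2 * N * (β - α) ^ 2)) := by
  classical
  have hβ0 : 0 < β := lt_trans hα hαβ
  have h1α : 0 < 1 - α := by linarith
  have h1β : 0 < 1 - β := by linarith
  set r : ℝ := α * (1 - β) / (β * (1 - α)) with hrdef
  have hr0 : 0 < r := by positivity
  have hr1 : r < 1 := by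
    rw [hrdef, div_lt_one (by positivity)]
    nlinarith
  set t : ℝ := Real.log r with htdef
  have ht : t ≤ 0 := (Real.log_neg hr0 hr1).le
  have hexp : Real.exp t = r := Real.exp_log hr0
  set c : ℝ := (1 - β) / (1 - α) with hcdef
  have hc0 : 0 < c := by positivity
  -- indicator variables
  set g : ℝ → ℝ := (Set.Iic qβ).indicator 1 with hgdef
  have hgmeas : Measurable g := measurable_one.indicator measurableSet_Iic
  set Y : Fin n → Fin N → Ω → ℝ := fun m i => g ∘ X m i with hYdef
  have hYmeas : ∀ m i, Measurable (Y m i) := fun m i => hgmeas.comp (hmeas m i)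
  have hA : ∀ m i, MeasurableSet {ω | X m i ω ≤ qβ} := fun m i => hmeas m i measurableSet_Iic
  have hexpY : ∀ m i, (fun ω => Real.exp (t * Y m i ω))
      = fun ω => ({ω | X m i ω ≤ qβ}).indicator (fun _ => Real.exp t - 1) ω + 1 := by
    intro m i; funext ω
    by_cases h : X m i ω ≤ qβ
    · simp [hYdef, hgdef, Set.indicator_apply, Set.mem_Iic, Set.mem_setOf_eq, h]
    · simp [hYdef, hgdef, Set.indicator_apply, Set.mem_Iic, Set.mem_setOf_eq, h]
  have hint : ∀ m i, Integrable (fun ω => Real.exp (t * Y m i ω)) P := by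
    intro m i
    rw [hexpY]
    exact ((integrable_const _).indicator (hA m i)).add (integrable_const 1)
  -- the mean of each indicator
  have hp : ∀ m i, β ≤ (P {ω | X m i ω ≤ qβ}).toReal := by
    intro m i
    have h' := ENNReal.toReal_mono (measure_ne_top P _) (hq m i)
    rwa [ENNReal.toReal_ofReal hβ0.le] at h'
  -- mgf of each indicator
  have hmgf : ∀ m i, mgf (Y m i) P t ≤ c := by
    intro m i
    have hval : mgf (Y m i) P t
        = (P {ω | X m i ω ≤ qβ}).toReal * (Real.exp t - 1) + 1 := by
      rw [mgf, hexpY]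
      rw [integral_add ((integrable_const _).indicator (hA m i)) (integrable_const 1)]
      rw [integral_indicator_const _ (hA m i)]
      simp [smul_eq_mul, mul_comm, measureReal_def]
    rw [hval, hexp]
    have h1 : (P {ω | X m i ω ≤ qβ}).toReal * (r - 1) ≤ β * (r - 1) := by
      have := hp m i
      nlinarith
    have h2 : β * (r - 1) + 1 = c := by
      rw [hrdef, hcdef]
      field_simp
      ring
    linarith
  -- per-batch independence
  have hiInd : ∀ m, iIndepFun (Y m) P := by
    intro m
    exact (indep_row X hindep m).comp (fun _ => g) (fun _ => hgmeas)
  -- the numeric bound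
  have hnum : Real.exp (-t * (α * N)) * c ^ N ≤ Real.exp (-2 * N * (β - α) ^ 2) := by
    have hcN : c ^ N = Real.exp ((N : ℝ) * Real.log c) := by
      rw [Real.exp_nat_mul, Real.exp_log hc0]
    rw [hcN, ← Real.exp_add, Real.exp_le_exp]
    have hlogr : t = Real.log α + Real.log (1 - β) - (Real.log β + Real.log (1 - α)) := by
      rw [htdef, hrdef, Real.log_div (by positivity) (by positivity),
        Real.log_mul hα.ne' h1β.ne', Real.log_mul hβ0.ne' h1α.ne']
    have hlogc : Real.log c = Real.log (1 - β) - Real.log (1 - α) := by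
      rw [hcdef, Real.log_div h1β.ne' h1α.ne']
    have hpin := two_point_pinsker hα hαβ hβ
    have hkey : -t * α + Real.log c ≤ -(2 * (β - α) ^ 2) := by
      rw [hlogr, hlogc]
      nlinarith
    have hN0 : (0:ℝ) ≤ N := Nat.cast_nonneg N
    calc -t * (α * N) + (N : ℝ) * Real.log c = (N : ℝ) * (-t * α + Real.log c) := by ring
      _ ≤ (N : ℝ) * (-(2 * (β - α) ^ 2)) := by
          exact mul_le_mul_of_nonneg_left hkey hN0
      _ = -2 * N * (β - α) ^ 2 := by ring
  -- per-batch bound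
  have hbatch : ∀ m : Fin n,
      P {ω | qβ < empQuantile N α (fun i => X m i ω)}
        ≤ ENNReal.ofReal (Real.exp (-2 * N * (β - α) ^ 2)) := by
    intro m
    have hsub : {ω | qβ < empQuantile N α (fun i => X m i ω)}
        ⊆ {ω | (∑ i : Fin N, Y m i) ω ≤ α * N} := by
      intro ω hω
      have hsum : (∑ i : Fin N, Y m i) ω
          = ((univ.filter fun i => X m i ω ≤ qβ).card : ℝ) := by
        rw [Finset.sum_apply]
        simp [hYdef, hgdef, Set.indicator_apply, Set.mem_Iic, Finset.sum_boole]
      have hcard : ¬ (α * N ≤ ((univ.filter fun i => X m i ω ≤ qβ).card : ℝ)) := by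
        intro hc
        exact absurd (empQuantile_le hα hN _ hc) (not_le.2 hω)
      rw [Set.mem_setOf_eq, hsum]
      linarith [not_le.1 hcard]
    have hFint : Integrable (fun ω => Real.exp (t * (∑ i ∈ univ, Y m i) ω)) P :=
      (hiInd m).integrable_exp_mul_sum (hYmeas m) (fun i _ => hint m i)
    have hcher := measure_le_le_exp_mul_mgf (μ := P) (X := ∑ i ∈ univ, Y m i)
      (α * N) ht hFint
    have hmgfsum : mgf (∑ i ∈ univ, Y m i) P t ≤ c ^ N := by
      rw [(hiInd m).mgf_sum (hYmeas m) univ]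
      calc ∏ i : Fin N, mgf (Y m i) P t ≤ ∏ _i : Fin N, c :=
            Finset.prod_le_prod (fun i _ => mgf_nonneg) (fun i _ => hmgf m i)
        _ = c ^ N := by simp
    have hreal : (P {ω | (∑ i ∈ univ, Y m i) ω ≤ α * N}).toReal
        ≤ Real.exp (-2 * N * (β - α) ^ 2) := by
      calc (P {ω | (∑ i ∈ univ, Y m i) ω ≤ α * N}).toReal
          ≤ Real.exp (-t * (α * N)) * mgf (∑ i ∈ univ, Y m i) P t := hcher
        _ ≤ Real.exp (-t * (α * N)) * c ^ N := by
            exact mul_le_mul_of_nonneg_left hmgfsum (Real.exp_pos _).le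
        _ ≤ Real.exp (-2 * N * (β - α) ^ 2) := hnum
    calc P {ω | qβ < empQuantile N α (fun i => X m i ω)}
        ≤ P {ω | (∑ i ∈ univ, Y m i) ω ≤ α * N} := measure_mono hsub
      _ = ENNReal.ofReal ((P {ω | (∑ i ∈ univ, Y m i) ω ≤ α * N}).toReal) :=
          (ENNReal.ofReal_toReal (measure_ne_top P _)).symm
      _ ≤ ENNReal.ofReal (Real.exp (-2 * N * (β - α) ^ 2)) := ENNReal.ofReal_le_ofReal hreal
  -- union bound
  have hEq : {ω | ∃ m, qβ < empQuantile N α (fun i => X m i ω)}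
      = ⋃ m, {ω | qβ < empQuantile N α (fun i => X m i ω)} := Set.setOf_exists _
  rw [hEq]
  calc P (⋃ m, {ω | qβ < empQuantile N α (fun i => X m i ω)})
      ≤ ∑' m, P {ω | qβ < empQuantile N α (fun i => X m i ω)} := measure_iUnion_le _
    _ = ∑ m : Fin n, P {ω | qβ < empQuantile N α (fun i => X m i ω)} := tsum_fintype _
    _ ≤ ∑ _m : Fin n, ENNReal.ofReal (Real.exp (-2 * N * (β - α) ^ 2)) :=
        Finset.sum_le_sum (fun m _ => hbatch m)
    _ = (n : ENNReal) * ENNReal.ofReal (Real.exp (-2 * N * (β - α) ^ 2)) := by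
        simp [Finset.sum_const, nsmul_eq_mul]
    _ = ENNReal.ofReal (n * Real.exp (-2 * N * (β - α) ^ 2)) := by
        rw [ENNReal.ofReal_mul (Nat.cast_nonneg n), ENNReal.ofReal_natCast]
end

section
/- (Proposition 1, single-sample variance reduction.) Let μ be a probability measure on a measurable space Ω, let A ⊆ Ω be measurable with μ(A) = α for some α ∈ (0,1], and let ν = α⁻¹·(μ restricted to A), which is a probability measure. Let H : Ω → ℝ be square-integrable with respect to μ and satisfy H(x) = 0 for every x ∉ A. Then Var_ν(α·H) ≤ α·Var_μ(H), where Var_ρ(f) = ∫ f² dρ − (∫ f dρ)² denotes the variance of f under the probability measure ρ. -/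
open MeasureTheory

/-- **Proposition 1 (single-sample variance reduction).** Let `μ` be a probability
measure, `A` measurable with `μ(A) = α`, `α ∈ (0,1]`, and let
`ν = α⁻¹·(μ restricted to A)`, which is a probability measure. If `H` is
square-integrable w.r.t. `μ` and vanishes outside `A`, then
`Var_ν(α·H) ≤ α·Var_μ(H)`, where `Var_ρ(f) = ∫ f² dρ - (∫ f dρ)²`. -/
theorem variance_reduction_tail_sampling
    {Ω : Type*} [MeasurableSpace Ω] (μ : Measure Ω) [IsProbabilityMeasure μ]
    {A : Set Ω} (hA : MeasurableSet A) {α : ℝ} (hα : α ∈ Set.Ioc (0 : ℝ) 1)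
    (hμA : μ A = ENNReal.ofReal α)
    (H : Ω → ℝ) (hH : MemLp H 2 μ) (hH0 : ∀ x ∉ A, H x = 0) :
    IsProbabilityMeasure ((ENNReal.ofReal α)⁻¹ • μ.restrict A) ∧
    (∫ x, (α * H x) ^ 2 ∂((ENNReal.ofReal α)⁻¹ • μ.restrict A)) -
        (∫ x, α * H x ∂((ENNReal.ofReal α)⁻¹ • μ.restrict A)) ^ 2 ≤
      α * ((∫ x, H x ^ 2 ∂μ) - (∫ x, H x ∂μ) ^ 2) := by
  obtain ⟨hα0, hα1⟩ := hα
  have hne : ENNReal.ofReal α ≠ 0 := by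
    simp [ENNReal.ofReal_eq_zero, not_le, hα0]
  have hprob : IsProbabilityMeasure ((ENNReal.ofReal α)⁻¹ • μ.restrict A) := by
    constructor
    simp [Measure.restrict_apply_univ, hμA, ENNReal.inv_mul_cancel hne]
  refine ⟨hprob, ?_⟩
  have htoReal : ((ENNReal.ofReal α)⁻¹).toReal = α⁻¹ := by
    rw [ENNReal.toReal_inv, ENNReal.toReal_ofReal hα0.le]
  have hres : ∀ f : Ω → ℝ, (∀ x ∉ A, f x = 0) → ∫ x in A, f x ∂μ = ∫ x, f x ∂μ := by
    intro f hf
    exact setIntegral_eq_integral_of_forall_compl_eq_zero hf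
  have h1 : ∫ x, (α * H x) ^ 2 ∂((ENNReal.ofReal α)⁻¹ • μ.restrict A)
      = α * ∫ x, H x ^ 2 ∂μ := by
    rw [integral_smul_measure, htoReal,
      hres (fun x => (α * H x) ^ 2) (fun x hx => by simp [hH0 x hx])]
    have : ∫ x, (α * H x) ^ 2 ∂μ = α ^ 2 * ∫ x, H x ^ 2 ∂μ := by
      rw [← integral_const_mul]
      congr 1; ext x; ring
    rw [this, smul_eq_mul]
    field_simp
  have h2 : ∫ x, α * H x ∂((ENNReal.ofReal α)⁻¹ • μ.restrict A) = ∫ x, H x ∂μ := by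
    rw [integral_smul_measure, htoReal,
      hres (fun x => α * H x) (fun x hx => by simp [hH0 x hx]),
      integral_const_mul, smul_eq_mul]
    field_simp
  rw [h1, h2]
  have : α * (∫ x, H x ∂μ) ^ 2 ≤ (∫ x, H x ∂μ) ^ 2 := by
    nlinarith [sq_nonneg (∫ x, H x ∂μ)]
  nlinarith
end

section
/- (Proposition 1, N-sample form.) Let μ be a probability measure on a measurable space Ω, let A ⊆ Ω be measurable with μ(A) = α for some α ∈ (0,1], and let ν = α⁻¹·(μ restricted to A), which is a probability measure. Let H : Ω → ℝ be square-integrable with respect to μ and satisfy H(x) = 0 for every x ∉ A. Let N ≥ 1, and consider N i.i.d. samples. Then the variance under the product measure ν^⊗N of the estimator (x₁,…,x_N) ↦ (1/N)·∑_{i=1}^N α·H(xᵢ) is at most α times the variance under μ^⊗N of the estimator (x₁,…,x_N) ↦ (1/N)·∑_{i=1}^N H(xᵢ). -/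
open MeasureTheory

lemma var_mean_aux {Ω : Type*} [MeasurableSpace Ω] (ρ : Measure Ω) [IsProbabilityMeasure ρ]
    (f : Ω → ℝ) (hf : MemLp f 2 ρ) (N : ℕ) (hN : 1 ≤ N) :
    (∫ x, ((1 / N) * ∑ i : Fin N, f (x i)) ^ 2 ∂(Measure.pi fun _ : Fin N => ρ)) -
      (∫ x, (1 / N) * ∑ i : Fin N, f (x i) ∂(Measure.pi fun _ : Fin N => ρ)) ^ 2 =
      (1 / N) * ((∫ y, f y ^ 2 ∂ρ) - (∫ y, f y ∂ρ) ^ 2) := by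
  letI : MeasureSpace Ω := { volume := ρ }
  haveI : IsProbabilityMeasure (volume : Measure Ω) := ‹IsProbabilityMeasure ρ›
  have hvolpi : (Measure.pi fun _ : Fin N => ρ) = (volume : Measure (Fin N → Ω)) :=
    (volume_pi).symm
  set S1 := ∫ y, f y ∂ρ with hS1
  set S2 := ∫ y, f y ^ 2 ∂ρ with hS2
  have hf1 : Integrable f ρ := hf.integrable one_le_two
  have hf2 : Integrable (fun y => f y * f y) ρ := by
    simpa [sq] using hf.integrable_sq
  classical
  set h : Fin N → Fin N → Ω → ℝ := fun i k => if k = i then f else fun _ => (1 : ℝ) with hh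
  have hprod : ∀ (i : Fin N) (x : Fin N → Ω), (∏ k, h i k (x k)) = f (x i) := by
    intro i x
    have : ∀ k : Fin N, (if k = i then f else fun _ => (1:ℝ)) (x k) = if k = i then f (x k) else 1 := by
      intro k; split_ifs <;> rfl
    simp only [hh]
    rw [Finset.prod_congr rfl fun k _ => this k, Finset.prod_ite_eq' Finset.univ i (fun k => f (x k))]
    simp
  -- generic product integral facts
  have key : ∀ g : Fin N → Ω → ℝ, (∀ k, Integrable (g k) ρ) →
      Integrable (fun x : Fin N → Ω => ∏ k, g k (x k)) (Measure.pi fun _ : Fin N => ρ) ∧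
      (∫ x, ∏ k, g k (x k) ∂(Measure.pi fun _ : Fin N => ρ)) = ∏ k, ∫ y, g k y ∂ρ := by
    intro g hg
    rw [hvolpi]
    exact ⟨Integrable.fintype_prod hg, integral_fintype_prod_eq_prod (fun k => g k)⟩
  have hint_h : ∀ i j k : Fin N, Integrable (fun y => h i k y * h j k y) ρ := by
    intro i j k
    simp only [hh]
    split_ifs
    · exact hf2
    · simpa using hf1
    · simpa using hf1
    · simpa using (integrable_const (1:ℝ) : Integrable (fun _ : Ω => (1:ℝ)) ρ)
  have hrepr : ∀ i j : Fin N, (fun x : Fin N → Ω => f (x i) * f (x j)) =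
      fun x => ∏ k, (fun y => h i k y * h j k y) (x k) := by
    intro i j; funext x
    simp only []
    rw [← hprod i x, ← hprod j x, ← Finset.prod_mul_distrib]
  have hpair_int : ∀ i j : Fin N,
      Integrable (fun x : Fin N → Ω => f (x i) * f (x j)) (Measure.pi fun _ : Fin N => ρ) := by
    intro i j
    rw [hrepr i j]
    exact (key _ (hint_h i j)).1
  have hpair_val : ∀ i j : Fin N,
      (∫ x, f (x i) * f (x j) ∂(Measure.pi fun _ : Fin N => ρ)) =
        if i = j then S2 else S1 ^ 2 := by
    intro i j
    have := (key _ (hint_h i j)).2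
    rw [show (∫ x, f (x i) * f (x j) ∂(Measure.pi fun _ : Fin N => ρ)) =
        ∫ x, ∏ k, (fun y => h i k y * h j k y) (x k) ∂(Measure.pi fun _ : Fin N => ρ) by
          rw [← hrepr i j], this]
    by_cases hij : i = j
    · subst hij
      have hval : ∀ k : Fin N, (∫ y, h i k y * h i k y ∂ρ) = if k = i then S2 else 1 := by
        intro k
        simp only [hh]
        split_ifs
        · simp only [hS2, sq]
        · simpa using (integral_const (1:ℝ) : (∫ _ : Ω, (1:ℝ) ∂ρ) = _)
      rw [Finset.prod_congr rfl fun k _ => hval k,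
        Finset.prod_ite_eq' Finset.univ i (fun _ => S2)]
      simp
    · have hval : ∀ k : Fin N, (∫ y, h i k y * h j k y ∂ρ) =
          (if k = i then S1 else 1) * (if k = j then S1 else 1) := by
        intro k
        simp only [hh]
        split_ifs with h1 h2
        · exact absurd (h1 ▸ h2 ▸ rfl : i = j) hij
        · simpa using hS1.symm
        · simpa using hS1.symm
        · simp
      rw [Finset.prod_congr rfl fun k _ => hval k, Finset.prod_mul_distrib,
        Finset.prod_ite_eq' Finset.univ i (fun _ => S1),
        Finset.prod_ite_eq' Finset.univ j (fun _ => S1)]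
      simp [hij, sq]
  have hone_int : ∀ i : Fin N,
      Integrable (fun x : Fin N → Ω => f (x i)) (Measure.pi fun _ : Fin N => ρ) := by
    intro i
    have : (fun x : Fin N → Ω => f (x i)) = fun x => ∏ k, h i k (x k) := by
      funext x; rw [hprod i x]
    rw [this]
    refine (key _ ?_).1
    intro k; simp only [hh]; split_ifs
    · exact hf1
    · exact integrable_const 1
  have hone_val : ∀ i : Fin N,
      (∫ x, f (x i) ∂(Measure.pi fun _ : Fin N => ρ)) = S1 := by
    intro i
    have hrw : (fun x : Fin N → Ω => f (x i)) = fun x => ∏ k, h i k (x k) := by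
      funext x; rw [hprod i x]
    have hintk : ∀ k : Fin N, Integrable (h i k) ρ := by
      intro k; simp only [hh]; split_ifs
      · exact hf1
      · exact integrable_const 1
    rw [hrw, (key _ hintk).2]
    have hval : ∀ k : Fin N, (∫ y, h i k y ∂ρ) = if k = i then S1 else 1 := by
      intro k; simp only [hh]; split_ifs
      · exact hS1.symm
      · simp
    rw [Finset.prod_congr rfl fun k _ => hval k,
      Finset.prod_ite_eq' Finset.univ i (fun _ => S1)]
    simp
  -- mean
  have Imean : (∫ x, ∑ i : Fin N, f (x i) ∂(Measure.pi fun _ : Fin N => ρ)) = N * S1 := by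
    rw [integral_finset_sum _ fun i _ => hone_int i]
    simp [hone_val, Finset.sum_const, Finset.card_univ, mul_comm]
  -- second moment
  have Isq : (∫ x, (∑ i : Fin N, f (x i)) ^ 2 ∂(Measure.pi fun _ : Fin N => ρ)) =
      N * S2 + ((N : ℝ) ^ 2 - N) * S1 ^ 2 := by
    have hexp : ∀ x : Fin N → Ω, (∑ i : Fin N, f (x i)) ^ 2 =
        ∑ i : Fin N, ∑ j : Fin N, f (x i) * f (x j) := by
      intro x; rw [sq, Finset.sum_mul_sum]
    simp_rw [hexp]
    rw [integral_finset_sum _ fun i _ => integrable_finset_sum _ fun j _ => hpair_int i j]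
    have : ∀ i : Fin N, (∑ j : Fin N,
        ∫ x, f (x i) * f (x j) ∂(Measure.pi fun _ : Fin N => ρ)) =
        S2 + ((N : ℝ) - 1) * S1 ^ 2 := by
      intro i
      rw [Finset.sum_congr rfl fun j _ => hpair_val i j]
      have : ∀ j : Fin N, (if i = j then S2 else S1 ^ 2) =
          S1 ^ 2 + (if i = j then S2 - S1 ^ 2 else 0) := by
        intro j; split_ifs <;> ring
      rw [Finset.sum_congr rfl fun j _ => this j, Finset.sum_add_distrib,
        Finset.sum_ite_eq Finset.univ i (fun _ => S2 - S1 ^ 2)]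
      simp [Finset.sum_const, Finset.card_univ]
      ring
    have hin : ∀ i : Fin N, (∫ x, ∑ j : Fin N, f (x i) * f (x j)
        ∂(Measure.pi fun _ : Fin N => ρ)) = S2 + ((N : ℝ) - 1) * S1 ^ 2 := by
      intro i
      rw [integral_finset_sum _ fun j _ => hpair_int i j]
      exact this i
    rw [Finset.sum_congr rfl fun i _ => hin i]
    simp [Finset.sum_const, Finset.card_univ]
    ring
  -- final computation
  have hNpos : (0 : ℝ) < N := by exact_mod_cast Nat.lt_of_lt_of_le Nat.zero_lt_one hN
  have hNne : (N : ℝ) ≠ 0 := ne_of_gt hNpos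
  simp only [mul_pow, integral_const_mul, Imean, Isq]
  field_simp
  ring


/-- **Proposition 1 (N-sample form).** Let `μ` be a probability measure, `A`
measurable with `μ(A) = α`, `α ∈ (0,1]`, and let `ν = α⁻¹·(μ restricted to A)`,
which is a probability measure. Let `H` be square-integrable w.r.t. `μ` and vanish
outside `A`, and let `N ≥ 1`. Then the variance under the product measure `ν^⊗N` of
the estimator `x ↦ (1/N)·∑ᵢ α·H(xᵢ)` is at most `α` times the variance under
`μ^⊗N` of the estimator `x ↦ (1/N)·∑ᵢ H(xᵢ)`, where the variance of `f` under a
probability measure `ρ` is `∫ f² dρ - (∫ f dρ)²`. -/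
theorem variance_reduction_tail_sampling_N_samples
    {Ω : Type*} [MeasurableSpace Ω] (μ : Measure Ω) [IsProbabilityMeasure μ]
    {A : Set Ω} (hA : MeasurableSet A) {α : ℝ} (hα : α ∈ Set.Ioc (0 : ℝ) 1)
    (hμA : μ A = ENNReal.ofReal α)
    (ν : Measure Ω) [IsProbabilityMeasure ν]
    (hν : ν = (ENNReal.ofReal α)⁻¹ • μ.restrict A)
    (H : Ω → ℝ) (hH : MemLp H 2 μ) (hH0 : ∀ x ∉ A, H x = 0)
    {N : ℕ} (hN : 1 ≤ N) :
    (∫ x, ((1 / N) * ∑ i : Fin N, α * H (x i)) ^ 2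
          ∂(Measure.pi fun _ : Fin N => ν)) -
        (∫ x, (1 / N) * ∑ i : Fin N, α * H (x i)
          ∂(Measure.pi fun _ : Fin N => ν)) ^ 2 ≤
      α * ((∫ x, ((1 / N) * ∑ i : Fin N, H (x i)) ^ 2
              ∂(Measure.pi fun _ : Fin N => μ)) -
            (∫ x, (1 / N) * ∑ i : Fin N, H (x i)
              ∂(Measure.pi fun _ : Fin N => μ)) ^ 2) := by
  obtain ⟨hα0, hα1⟩ := hα
  have hαne : α ≠ 0 := ne_of_gt hα0
  have hνH : MemLp (fun y => α * H y) 2 ν := by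
    have hHν : MemLp H 2 ν := by
      rw [hν]
      exact (hH.restrict A).smul_measure
        (ENNReal.inv_ne_top.2 (ENNReal.ofReal_pos.mpr hα0).ne')
    exact hHν.const_mul α
  have htoReal : ((ENNReal.ofReal α)⁻¹).toReal = α⁻¹ := by
    rw [ENNReal.toReal_inv, ENNReal.toReal_ofReal hα0.le]
  have Hint : ∀ g : Ω → ℝ, (∀ x ∉ A, g x = 0) →
      (∫ y, g y ∂ν) = α⁻¹ * ∫ y, g y ∂μ := by
    intro g hg
    rw [hν, integral_smul_measure, htoReal,
      setIntegral_eq_integral_of_forall_compl_eq_zero hg, smul_eq_mul]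
  have e1 : (∫ y, α * H y ∂ν) = ∫ y, H y ∂μ := by
    rw [integral_const_mul, Hint H hH0]
    field_simp
  have e2 : (∫ y, (α * H y) ^ 2 ∂ν) = α * ∫ y, H y ^ 2 ∂μ := by
    simp_rw [mul_pow]
    rw [integral_const_mul, Hint (fun y => H y ^ 2) (fun x hx => by simp [hH0 x hx])]
    field_simp
  have h1 := var_mean_aux ν (fun y => α * H y) hνH N hN
  have h2 := var_mean_aux μ H hH N hN
  simp only [] at h1
  rw [h1, h2, e1, e2]
  have h1N : (0 : ℝ) ≤ 1 / (N : ℝ) := by positivity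
  nlinarith [sq_nonneg (∫ y, H y ∂μ), mul_nonneg h1N (sq_nonneg (∫ y, H y ∂μ))]
end
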